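/- Let 𝔞 be a nonzero ideal of the ring of integers 𝒪_K of a quadratic field K that is divisible by no rational integer n > 1. Then every rational integer r ∈ 𝔞 ∩ ℤ is divisible by the ideal norm N(𝔞). -/

import Mathlib

/-- In a commutative ring whose additive group is generated by a single element,
the canonical map from `ℤ` is surjective. -/
lemma int_cast_surjective_of_gen {S : Type*} [CommRing S] (g : S)
    (hg : ∀ x : S, x ∈ AddSubgroup.zmultiples g) :
    Function.Surjective (Int.cast : ℤ → S) := by
  obtain ⟨k, hk0⟩ := hg 1
  obtain ⟨l, hl0⟩ := hg (g * g)
  have hk : k • g = 1 := hk0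
  have hl : l • g = g * g := hl0
  have key : g = (k * l) • g := by
    conv_lhs => rw [← one_mul g, ← hk, smul_mul_assoc, ← hl, smul_smul]
  have hg1 : g = l • (1 : S) := by
    rw [← hk, smul_smul, mul_comm l k, ← key]
  intro x
  obtain ⟨n, hn0⟩ := hg x
  have hn : n • g = x := hn0
  rw [← hn, hg1, smul_smul]
  exact ⟨n * l, (zsmul_one _).symm⟩

set_option synthInstance.maxHeartbeats 1000000 in
set_option maxHeartbeats 2000000 in
/-- If `𝔞` is a nonzero ideal of the ring of integers of a quadratic field `K`
divisible by no rational integer `n > 1`, then every rational integer in `𝔞`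
is divisible by the ideal norm `N(𝔞)`. -/
theorem ideal_norm_dvd_rational (K : Type*) [Field K] [NumberField K]
    (hrank : Module.finrank ℚ K = 2)
    (𝔞 : Ideal (NumberField.RingOfIntegers K)) (h0 : 𝔞 ≠ ⊥)
    (hnd : ∀ n : ℤ, 1 < n → ¬ (𝔞 ≤ Ideal.span {(n : NumberField.RingOfIntegers K)})) :
    ∀ r : ℤ, (r : NumberField.RingOfIntegers K) ∈ 𝔞 → (Ideal.absNorm 𝔞 : ℤ) ∣ r := by
  intro r hr
  -- `(NumberField.RingOfIntegers K)` has a `ℤ`-basis indexed by `Fin 2`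
  have hrk : Module.finrank ℤ (NumberField.RingOfIntegers K) = 2 := by
    rw [NumberField.RingOfIntegers.rank, hrank]
  have hcard : Fintype.card (Module.Free.ChooseBasisIndex ℤ (NumberField.RingOfIntegers K)) = 2 := by
    rw [← Module.finrank_eq_card_chooseBasisIndex, hrk]
  let e : Module.Free.ChooseBasisIndex ℤ (NumberField.RingOfIntegers K) ≃ Fin 2 := Fintype.equivFinOfCardEq hcard
  let b : Module.Basis (Fin 2) ℤ (NumberField.RingOfIntegers K) := (Module.Free.chooseBasis ℤ (NumberField.RingOfIntegers K)).reindex e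
  -- Smith normal form data
  set a : Fin 2 → ℤ := 𝔞.smithCoeffs b h0 with ha
  -- the gcd of the Smith coefficients divides the ideal
  have hgcd : ∀ n : ℤ, (n ∣ a 0) → (n ∣ a 1) → 𝔞 ≤ Ideal.span {(n : (NumberField.RingOfIntegers K))} := by
    intro n hn0 hn1
    intro x hx
    obtain ⟨c, hc⟩ := (Basis.mem_ideal_iff' (𝔞.selfBasis b h0)).mp hx
    have hsb := 𝔞.selfBasis_def b h0
    rw [Ideal.mem_span_singleton]
    rw [hc, Fin.sum_univ_two, hsb 0, hsb 1]
    have key : ∀ i : Fin 2, n ∣ a i → ((n : (NumberField.RingOfIntegers K))) ∣ c i • (a i • 𝔞.ringBasis b h0 i) := by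
      intro i hni
      obtain ⟨m, hm⟩ := hni
      refine ⟨(c i * m) • 𝔞.ringBasis b h0 i, ?_⟩
      rw [← zsmul_eq_mul, smul_smul, smul_smul, hm]
      congr 1
      ring
    exact dvd_add (key 0 hn0) (key 1 hn1)
  -- the Smith coefficients are coprime
  have hane : ∀ i, a i ≠ 0 := fun i => Ideal.smithCoeffs_ne_zero b 𝔞 h0 i
  have hcop : Nat.Coprime (a 0).natAbs (a 1).natAbs := by
    by_contra hne
    have h1le : 1 ≤ Int.gcd (a 0) (a 1) := Nat.one_le_iff_ne_zero.mpr (by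
      simp [Int.gcd_eq_zero_iff, hane 0])
    have h1lt : 1 < (Int.gcd (a 0) (a 1) : ℤ) := by
      rcases lt_or_eq_of_le h1le with h | h
      · exact_mod_cast h
      · exact absurd h.symm hne
    exact hnd _ h1lt (hgcd _ (Int.gcd_dvd_left _ _) (Int.gcd_dvd_right _ _))
  -- the quotient is an additively cyclic finite ring
  letI : Fintype ((NumberField.RingOfIntegers K) ⧸ 𝔞) := @Fintype.ofFinite _ (Ideal.finiteQuotientOfFreeOfNeBot 𝔞 h0)
  haveI : ∀ i, NeZero (a i).natAbs := fun i => ⟨Int.natAbs_ne_zero.mpr (hane i)⟩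
  let E1 : ((NumberField.RingOfIntegers K) ⧸ 𝔞) ≃+ ∀ i : Fin 2, ZMod (a i).natAbs := 𝔞.quotientEquivPiZMod b h0
  let E2 : (∀ i : Fin 2, ZMod (a i).natAbs) ≃+ ZMod (a 0).natAbs × ZMod (a 1).natAbs :=
    { piFinTwoEquiv (fun i => ZMod (a i).natAbs) with map_add' := fun _ _ => rfl }
  let E3 : ZMod ((a 0).natAbs * (a 1).natAbs) ≃+ ZMod (a 0).natAbs × ZMod (a 1).natAbs :=
    (ZMod.chineseRemainder hcop).toAddEquiv
  let F : ZMod ((a 0).natAbs * (a 1).natAbs) ≃+ ((NumberField.RingOfIntegers K) ⧸ 𝔞) := (E3.trans E2.symm).trans E1.symm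
  -- `((NumberField.RingOfIntegers K) ⧸ 𝔞)` is generated by `F 1`
  have hgen : ∀ x : ((NumberField.RingOfIntegers K) ⧸ 𝔞), x ∈ AddSubgroup.zmultiples (F 1) := by
    intro x
    have : F.symm x ∈ AddSubgroup.zmultiples (1 : ZMod ((a 0).natAbs * (a 1).natAbs)) := by
      refine ⟨((F.symm x).val : ℤ), ?_⟩
      simp [ZMod.natCast_val, ZMod.intCast_cast, ZMod.intCast_zmod_cast]
    obtain ⟨k, hk⟩ := this
    refine ⟨k, ?_⟩
    show k • F 1 = x
    have hk' : k • (1 : ZMod ((a 0).natAbs * (a 1).natAbs)) = F.symm x := hk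
    rw [← map_zsmul F k 1, hk', AddEquiv.apply_symm_apply]
  -- hence `ℤ → ((NumberField.RingOfIntegers K) ⧸ 𝔞)` is surjective, so `1` generates `((NumberField.RingOfIntegers K) ⧸ 𝔞)`
  have hsurj := int_cast_surjective_of_gen (F 1) hgen
  have hone : ∀ x : ((NumberField.RingOfIntegers K) ⧸ 𝔞), x ∈ AddSubgroup.zmultiples (1 : ((NumberField.RingOfIntegers K) ⧸ 𝔞)) := by
    intro x
    obtain ⟨n, hn⟩ := hsurj x
    refine ⟨n, ?_⟩
    show n • (1 : NumberField.RingOfIntegers K ⧸ 𝔞) = x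
    rw [zsmul_one, hn]
  have horder : addOrderOf (1 : ((NumberField.RingOfIntegers K) ⧸ 𝔞)) = Nat.card ((NumberField.RingOfIntegers K) ⧸ 𝔞) :=
    addOrderOf_eq_card_of_forall_mem_zmultiples hone
  have hNorm : Ideal.absNorm 𝔞 = Nat.card ((NumberField.RingOfIntegers K) ⧸ 𝔞) := by
    rw [Ideal.absNorm_apply, Submodule.cardQuot_apply]
  have hr0 : ((r : ℤ) : ((NumberField.RingOfIntegers K) ⧸ 𝔞)) = 0 := by
    have : (Ideal.Quotient.mk 𝔞) ((r : ℤ) : (NumberField.RingOfIntegers K)) = 0 := Ideal.Quotient.eq_zero_iff_mem.mpr hr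
    rwa [map_intCast] at this
  have hdvd : ((addOrderOf (1 : ((NumberField.RingOfIntegers K) ⧸ 𝔞)) : ℤ)) ∣ r := by
    rw [addOrderOf_dvd_iff_zsmul_eq_zero, zsmul_one, hr0]
  rwa [hNorm, ← horder]
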